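/- arXiv:2601.01607 — 5 statements merged into one kernel-verified Lean document; each statement's English description precedes it below -/
import Mathlib

section
/- For every nonempty compact set of possible allocations Γ ⊆ ℝ_+^k and every random valuation X with values in ℝ_+^k that has finite expectation (E[‖X‖] < ∞), there exists an IC and IR Γ-mechanism μ = (q,s) attaining the optimal revenue, i.e., E[s(X)] = Rev_Γ(X) = sup over all IC and IR Γ-mechanisms μ' = (q',s') of E[s'(X)]. -/
open MeasureTheory Filter

noncomputable section

abbrev E (k : ℕ) := EuclideanSpace ℝ (Fin k)

def orthant (k : ℕ) : Set (E k) := {x | ∀ i, 0 ≤ x i}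

/-- The dot product `g · x` on `ℝ^k`. -/
def dotp {k : ℕ} (g x : E k) : ℝ := ∑ i, g i * x i

def IsAlloc {k : ℕ} (Γ : Set (E k)) (q : E k → E k) : Prop :=
  ∀ x ∈ orthant k, q x ∈ Γ

def IsIC {k : ℕ} (q : E k → E k) (s : E k → ℝ) : Prop :=
  ∀ x ∈ orthant k, ∀ y ∈ orthant k, dotp (q x) x - s x ≥ dotp (q y) x - s y

def IsIR {k : ℕ} (q : E k → E k) (s : E k → ℝ) : Prop :=
  ∀ x ∈ orthant k, 0 ≤ dotp (q x) x - s x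

def IsNPT {k : ℕ} (s : E k → ℝ) : Prop :=
  ∀ x ∈ orthant k, 0 ≤ s x

/-- The set of subgradients of `f` at `x`. -/
def Subgrad {k : ℕ} (f : E k → ℝ) (x : E k) : Set (E k) :=
  {g | ∀ y, f y - f x ≥ dotp g (y - x)}

/-- `b ∈ B_Γ`: convex on `ℝ^k`, `b 0 = 0`, and a subgradient in `Γ` at every point. -/
def BClass {k : ℕ} (Γ : Set (E k)) (b : E k → ℝ) : Prop :=
  ConvexOn ℝ Set.univ b ∧ b 0 = 0 ∧ ∀ x, (Subgrad b x ∩ Γ).Nonempty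

/-- One-sided directional derivative `f′(x;y) = lim_{δ→0⁺} (f(x+δy)-f(x))/δ`. -/
def dirDeriv {k : ℕ} (b : E k → ℝ) (x y : E k) : ℝ :=
  limUnder (nhdsWithin (0:ℝ) (Set.Ioi 0)) fun δ => (b (x + δ • y) - b x) / δ

/-- The extended buyer payoff function `b(x) = sup_{z ∈ ℝ₊^k} [q(z)·x − s(z)]`. -/
def extPayoff {k : ℕ} (q : E k → E k) (s : E k → ℝ) (x : E k) : ℝ :=
  sSup ((fun z => dotp (q z) x - s z) '' orthant k)

def SellerFavorable {k : ℕ} (q : E k → E k) (s : E k → ℝ) : Prop :=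
  ∀ x ∈ orthant k, s x = dirDeriv (extPayoff q s) x x - extPayoff q s x

section aux
variable {k : ℕ}

lemma dotp_eq_inner (g x : E k) : dotp g x = inner g x (𝕜 := ℝ) := by
  simp [dotp, PiLp.inner_apply, RCLike.inner_apply, mul_comm]

lemma dotp_sub (g x y : E k) : dotp g (x - y) = dotp g x - dotp g y := by
  simp [dotp_eq_inner, inner_sub_right]

lemma abs_dotp_le (g x : E k) : |dotp g x| ≤ ‖g‖ * ‖x‖ := by
  rw [dotp_eq_inner]; exact abs_real_inner_le_norm g x

lemma dotp_nonneg {g x : E k} (hg : g ∈ orthant k) (hx : x ∈ orthant k) : 0 ≤ dotp g x :=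
  Finset.sum_nonneg fun i _ => mul_nonneg (hg i) (hx i)

lemma dotp_zero_right (g : E k) : dotp g 0 = 0 := by simp [dotp]

lemma continuous_dotp : Continuous fun p : E k × E k => dotp p.1 p.2 := by
  simp only [dotp]
  exact continuous_finset_sum _ fun i _ =>
    by fun_prop

lemma zero_mem_orthant : (0 : E k) ∈ orthant k := fun i => le_refl _

/-- componentwise positive part -/
def pos (x : E k) : E k := WithLp.toLp 2 (fun i => max (x i) 0)

lemma pos_mem (x : E k) : pos x ∈ orthant k := fun i => le_max_right _ _

lemma pos_eq {x : E k} (hx : x ∈ orthant k) : pos x = x := by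
  ext i; exact max_eq_left (hx i)

lemma norm_pos_sub_le (x y : E k) : ‖pos x - pos y‖ ≤ ‖x - y‖ := by
  rw [EuclideanSpace.norm_eq, EuclideanSpace.norm_eq]
  apply Real.sqrt_le_sqrt
  apply Finset.sum_le_sum
  intro i _
  have h1 : |pos x i - pos y i| ≤ |x i - y i| := abs_max_sub_max_le_abs _ _ _
  have : ((pos x - pos y) i) = pos x i - pos y i := rfl
  have h2 : ((x - y) i) = x i - y i := rfl
  rw [this, h2, Real.norm_eq_abs, Real.norm_eq_abs]
  exact pow_le_pow_left₀ (abs_nonneg _) h1 2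

lemma continuous_pos : Continuous (pos (k := k)) := by
  have : LipschitzWith 1 (pos (k := k)) := by
    intro x y
    rw [edist_dist, edist_dist, dist_eq_norm, dist_eq_norm]
    simpa using ENNReal.ofReal_le_ofReal (norm_pos_sub_le x y)
  exact this.continuous

end aux

section helpers
variable {k : ℕ}

lemma real_le_of_forall_pos {a b : ℝ} (h : ∀ ε : ℝ, 0 < ε → a ≤ b + ε) : a ≤ b := by
  by_contra hc
  push_neg at hc
  have := h ((a - b)/2) (by linarith)
  linarith

lemma abs_sub_le'' (a b : ℝ) : |a - b| ≤ |a| + |b| := by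
  rw [sub_eq_add_neg]
  exact (abs_add_le _ _).trans (by rw [abs_neg])

end helpers

open Topology
set_option maxHeartbeats 1000000

/-- existence of a revenue-maximizing IC and IR mechanism. -/
theorem stmt0 {k : ℕ} (hk : 1 ≤ k) (Γ : Set (E k)) (hΓne : Γ.Nonempty)
    (hΓc : IsCompact Γ) (hΓ : Γ ⊆ orthant k)
    {Ω : Type*} [MeasurableSpace Ω] (P : Measure Ω) [IsProbabilityMeasure P]
    (X : Ω → E k) (hXm : Measurable X) (hXpos : ∀ ω, X ω ∈ orthant k)
    (hXint : Integrable (fun ω => ‖X ω‖) P) :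
    ∃ q : E k → E k, ∃ s : E k → ℝ, IsAlloc Γ q ∧ IsIC q s ∧ IsIR q s ∧
      (∫ ω, s (X ω) ∂P) =
        sSup {r : ℝ | ∃ q' : E k → E k, ∃ s' : E k → ℝ,
          IsAlloc Γ q' ∧ IsIC q' s' ∧ IsIR q' s' ∧ r = ∫ ω, s' (X ω) ∂P} := by
  classical
  obtain ⟨g₀, hg₀⟩ := hΓne
  obtain ⟨L, hLmem⟩ := (hΓc.image continuous_norm).bddAbove
  have hL : ∀ g ∈ Γ, ‖g‖ ≤ L := fun g hg => hLmem (Set.mem_image_of_mem _ hg)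
  have hL0 : 0 ≤ L := le_trans (norm_nonneg g₀) (hL g₀ hg₀)
  have hdot_le : ∀ g ∈ Γ, ∀ x : E k, |dotp g x| ≤ L * ‖x‖ := fun g hg x =>
    (abs_dotp_le g x).trans (mul_le_mul_of_nonneg_right (hL g hg) (norm_nonneg x))
  set S := {r : ℝ | ∃ q' : E k → E k, ∃ s' : E k → ℝ,
      IsAlloc Γ q' ∧ IsIC q' s' ∧ IsIR q' s' ∧ r = ∫ ω, s' (X ω) ∂P} with hS_def
  -- the trivial mechanism
  have htriv : (0 : ℝ) ∈ S := by
    refine ⟨fun _ => g₀, fun _ => 0, fun x _ => hg₀, fun x hx y hy => le_refl _,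
      fun x hx => ?_, by simp⟩
    · simpa using dotp_nonneg (hΓ hg₀) hx
  have hXint' : Integrable (fun ω => L * ‖X ω‖) P := hXint.const_mul L
  set A := ∫ ω, L * ‖X ω‖ ∂P with hA_def
  have hA0 : 0 ≤ A := integral_nonneg fun ω => mul_nonneg hL0 (norm_nonneg _)
  have hSle : ∀ r ∈ S, r ≤ A := by
    rintro r ⟨q', s', hq', hICq, hIRq, rfl⟩
    by_cases hi : Integrable (fun ω => s' (X ω)) P
    · refine integral_mono hi hXint' fun ω => ?_
      have hx := hXpos ω
      have h1 := hIRq _ hx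
      have h2 := hdot_le _ (hq' _ hx) (X ω)
      have h3 := le_abs_self (dotp (q' (X ω)) (X ω))
      simp only []
      linarith
    · rw [integral_undef hi]; exact hA0
  have hSbdd : BddAbove S := ⟨A, hSle⟩
  set rstar := sSup S with hrstar_def
  have hrstarA : rstar ≤ A := csSup_le ⟨0, htriv⟩ hSle
  -- a "nice" maximizing sequence of mechanisms
  obtain ⟨r, hrmono, hrtend, hrmem⟩ := exists_seq_tendsto_sSup ⟨0, htriv⟩ hSbdd
  have hnice : ∀ n, ∃ q' : E k → E k, ∃ s' : E k → ℝ, IsAlloc Γ q' ∧ IsIC q' s' ∧ IsIR q' s'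
      ∧ s' 0 = 0 ∧ Integrable (fun ω => s' (X ω)) P ∧ r n ≤ ∫ ω, s' (X ω) ∂P
      ∧ (∫ ω, s' (X ω) ∂P) ∈ S := by
    intro n
    obtain ⟨q', s', h1, h2, h3, heq⟩ := hrmem n
    by_cases hi : Integrable (fun ω => s' (X ω)) P
    · set c := -(s' 0) with hc_def
      have hc0 : 0 ≤ c := by
        have := h3 0 zero_mem_orthant
        rw [dotp_zero_right] at this
        simpa [hc_def] using this
      have hq00 : (0 : E k) ∈ orthant k := zero_mem_orthant
      refine ⟨q', fun x => s' x + c, h1, fun x hx y hy => by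
          have := h2 x hx y hy; simp only []; linarith,
        fun x hx => ?_, by simp [hc_def], hi.add (MeasureTheory.integrable_const c), ?_, ?_⟩
      · have h20 := h2 x hx 0 hq00
        have h4 : 0 ≤ dotp (q' 0) x := dotp_nonneg (hΓ (h1 0 hq00)) hx
        simp only []
        linarith
      · have : ∫ ω, (s' (X ω) + c) ∂P = (∫ ω, s' (X ω) ∂P) + c := by
          rw [integral_add hi (integrable_const c), integral_const]
          simp
        rw [this, ← heq]
        linarith
      · exact ⟨q', fun x => s' x + c, h1, fun x hx y hy => by
          have := h2 x hx y hy; simp only []; linarith, fun x hx => by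
          have h20 := h2 x hx 0 hq00
          have h4 : 0 ≤ dotp (q' 0) x := dotp_nonneg (hΓ (h1 0 hq00)) hx
          simp only []
          linarith, rfl⟩
    · have hr0 : r n = 0 := by rw [heq, integral_undef hi]
      refine ⟨fun _ => g₀, fun _ => 0, fun x _ => hg₀, fun x hx y hy => le_refl _,
        fun x hx => by simpa using dotp_nonneg (hΓ hg₀) hx, rfl, integrable_const 0, ?_, ?_⟩
      · simp [hr0]
      · have : (∫ (_ : Ω), (0:ℝ) ∂P) = 0 := by simp
        rw [this]; exact htriv
  choose qN sN hAl hICn hIRn hs0 hInt hgeN hmemN using hnice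
  set ρ := fun n => ∫ ω, sN n (X ω) ∂P with hρ_def
  have hρtend : Tendsto ρ atTop (𝓝 rstar) :=
    tendsto_of_tendsto_of_tendsto_of_le_of_le hrtend tendsto_const_nhds hgeN
      (fun n => le_csSup hSbdd (hmemN n))
  -- utility functions
  set u := fun n x => dotp (qN n x) x - sN n x with hu_def
  have hu0 : ∀ n, u n 0 = 0 := fun n => by simp [hu_def, dotp_zero_right, hs0 n]
  have hunn : ∀ n, ∀ x ∈ orthant k, 0 ≤ u n x := fun n x hx => hIRn n x hx
  have huIC : ∀ n, ∀ x ∈ orthant k, ∀ y ∈ orthant k,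
      dotp (qN n y) (x - y) ≤ u n x - u n y := by
    intro n x hx y hy
    have := hICn n x hx y hy
    rw [dotp_sub]
    simp only [hu_def]
    linarith
  have huLip : ∀ n, ∀ x ∈ orthant k, ∀ y ∈ orthant k, |u n x - u n y| ≤ L * ‖x - y‖ := by
    intro n x hx y hy
    have h1 := huIC n x hx y hy
    have h2 := huIC n y hy x hx
    have b1 := hdot_le _ (hAl n y hy) (x - y)
    have b2 := hdot_le _ (hAl n x hx) (y - x)
    rw [abs_le] at b1 b2 ⊢
    have hnrm : ‖y - x‖ = ‖x - y‖ := norm_sub_rev y x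
    constructor
    · linarith
    · rw [hnrm] at b2; linarith
  have husN : ∀ n x, sN n x = dotp (qN n x) x - u n x := by
    intro n x; simp [hu_def]
  have hsNabs : ∀ n, ∀ x ∈ orthant k, |sN n x| ≤ 2 * L * ‖x‖ := by
    intro n x hx
    have h1 := hdot_le _ (hAl n x hx) x
    have h2 : |u n x| ≤ L * ‖x‖ := by
      have := huLip n x hx 0 zero_mem_orthant
      rw [hu0 n, sub_zero, sub_zero] at this
      exact this
    calc |sN n x| = |dotp (qN n x) x - u n x| := by rw [husN]
      _ ≤ |dotp (qN n x) x| + |u n x| := abs_sub_le'' _ _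
      _ ≤ 2 * L * ‖x‖ := by linarith
  have hsNle : ∀ n, ∀ x ∈ orthant k, sN n x ≤ L * ‖x‖ := by
    intro n x hx
    have h1 := hdot_le _ (hAl n x hx) x
    have h2 := hunn n x hx
    have h3 := le_abs_self (dotp (qN n x) x)
    rw [husN]
    linarith
  -- global extensions
  set Useq := fun n x => u n (pos x) with hUseq_def
  have hUseqLip : ∀ n x y, |Useq n x - Useq n y| ≤ L * ‖x - y‖ := fun n x y =>
    (huLip n _ (pos_mem x) _ (pos_mem y)).trans
      (mul_le_mul_of_nonneg_left (norm_pos_sub_le x y) hL0)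
  have hUseq0 : ∀ n, Useq n 0 = 0 := fun n => by
    simp only [hUseq_def, pos_eq zero_mem_orthant]; exact hu0 n
  have hUseqBd : ∀ n x, |Useq n x| ≤ L * ‖x‖ := by
    intro n x
    have := hUseqLip n x 0
    rw [hUseq0 n, sub_zero, sub_zero] at this
    exact this
  have hUseqeq : ∀ n, ∀ x ∈ orthant k, Useq n x = u n x := fun n x hx => by
    simp only [hUseq_def, pos_eq hx]
  -- dense sequence and diagonal extraction
  obtain ⟨D, hD⟩ := TopologicalSpace.exists_dense_seq (E k)
  set box : Set (ℕ → ℝ) := Set.pi Set.univ fun m => Set.Icc (-(L * ‖D m‖)) (L * ‖D m‖)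
    with hbox_def
  have hboxc : IsCompact box := isCompact_univ_pi fun m => isCompact_Icc
  have hmem' : ∀ n, (fun m => Useq n (D m)) ∈ box := fun n =>
    Set.mem_univ_pi.2 fun m => by
      have := abs_le.1 (hUseqBd n (D m)); exact ⟨this.1, this.2⟩
  obtain ⟨c, -, φ, hφmono, hφtend⟩ := hboxc.tendsto_subseq hmem'
  have hφten : ∀ m, Tendsto (fun j => Useq (φ j) (D m)) atTop (𝓝 (c m)) := by
    intro m
    exact tendsto_pi_nhds.1 hφtend m
  -- pointwise limit U
  have hUex : ∀ x : E k, ∃ y, Tendsto (fun j => Useq (φ j) x) atTop (𝓝 y) := by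
    intro x
    have hcs : CauchySeq fun j => Useq (φ j) x := by
      rw [Metric.cauchySeq_iff]
      intro ε hε
      obtain ⟨m, hm⟩ := hD.exists_dist_lt x (show (0:ℝ) < ε/(4*(L+1)) by positivity)
      have hcau := (hφten m).cauchySeq
      rw [Metric.cauchySeq_iff] at hcau
      obtain ⟨N, hN⟩ := hcau (ε/3) (by positivity)
      refine ⟨N, fun a ha b hb => ?_⟩
      have key : ∀ j, dist (Useq (φ j) x) (Useq (φ j) (D m)) ≤ L * dist x (D m) := by
        intro j
        rw [Real.dist_eq, dist_eq_norm]
        exact hUseqLip (φ j) x (D m)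
      have hLd : L * dist x (D m) < ε/3 := by
        have h1 : L * dist x (D m) ≤ (L+1) * dist x (D m) :=
          mul_le_mul_of_nonneg_right (by linarith) dist_nonneg
        have h2 : (L+1) * dist x (D m) < (L+1) * (ε/(4*(L+1))) :=
          mul_lt_mul_of_pos_left hm (by linarith)
        have h3 : (L+1) * (ε/(4*(L+1))) = ε/4 := by field_simp
        linarith
      calc dist (Useq (φ a) x) (Useq (φ b) x)
          ≤ dist (Useq (φ a) x) (Useq (φ a) (D m)) + dist (Useq (φ a) (D m)) (Useq (φ b) (D m))
            + dist (Useq (φ b) (D m)) (Useq (φ b) x) := dist_triangle4 _ _ _ _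
        _ < ε/3 + ε/3 + ε/3 := by
            have k1 := key a
            have k2 := key b
            have k3 := hN a ha b hb
            rw [dist_comm (Useq (φ b) (D m)) (Useq (φ b) x)] at *
            gcongr <;> linarith [hN a ha b hb]
        _ = ε := by ring
    exact cauchySeq_tendsto_of_complete hcs
  choose U hU using hUex
  have hUlip : ∀ x y, |U x - U y| ≤ L * ‖x - y‖ := fun x y =>
    le_of_tendsto (((hU x).sub (hU y)).abs)
      (Filter.Eventually.of_forall fun j => hUseqLip (φ j) x y)
  have hUcont : Continuous U := by
    have : LipschitzWith (Real.toNNReal L) U := by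
      apply LipschitzWith.of_dist_le_mul
      intro x y
      rw [Real.dist_eq, dist_eq_norm, Real.coe_toNNReal L hL0]
      exact hUlip x y
    exact this.continuous
  have hUO : ∀ x ∈ orthant k, Tendsto (fun j => u (φ j) x) atTop (𝓝 (U x)) := by
    intro x hx
    exact (hU x).congr fun j => hUseqeq (φ j) x hx
  have hUnn : ∀ x ∈ orthant k, 0 ≤ U x := fun x hx =>
    ge_of_tendsto (hUO x hx) (Filter.Eventually.of_forall fun j => hunn (φ j) x hx)
  -- limit subgradient sets
  set G : E k → Set (E k) :=
    fun x => {g ∈ Γ | ∀ y ∈ orthant k, dotp g (y - pos x) ≤ U y - U (pos x)} with hG_def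
  have hdotc : ∀ v : E k, Continuous fun g : E k => dotp g v := fun v =>
    continuous_dotp.comp (continuous_id.prodMk continuous_const)
  have hsub_lim : ∀ z ∈ orthant k, ∀ ψ : ℕ → ℕ, StrictMono ψ → ∀ g : E k,
      Tendsto (fun i => qN (φ (ψ i)) z) atTop (𝓝 g) →
      ∀ y ∈ orthant k, dotp g (y - z) ≤ U y - U z := by
    intro z hz ψ hψ g hg y hy
    have h1 : Tendsto (fun i => u (φ (ψ i)) y - u (φ (ψ i)) z) atTop (𝓝 (U y - U z)) :=
      ((hUO y hy).comp hψ.tendsto_atTop).sub ((hUO z hz).comp hψ.tendsto_atTop)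
    have h2 : Tendsto (fun i => dotp (qN (φ (ψ i)) z) (y - z)) atTop (𝓝 (dotp g (y - z))) :=
      ((hdotc (y - z)).tendsto g).comp hg
    exact le_of_tendsto_of_tendsto' h2 h1 fun i => huIC (φ (ψ i)) y hy z hz
  have hGne : ∀ x, (G x).Nonempty := by
    intro x
    have hz := pos_mem x
    obtain ⟨g, hgΓ, ψ, hψ, hgt⟩ := hΓc.tendsto_subseq (fun i => hAl (φ i) (pos x) hz)
    exact ⟨g, hgΓ, hsub_lim (pos x) hz ψ hψ g hgt⟩
  have hGcpt : ∀ x, IsCompact (G x) := by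
    intro x
    apply hΓc.inter_right
    have hset : {g : E k | ∀ y ∈ orthant k, dotp g (y - pos x) ≤ U y - U (pos x)}
        = ⋂ y ∈ orthant k, {g : E k | dotp g (y - pos x) ≤ U y - U (pos x)} := by
      ext g; simp [Set.mem_iInter]
    show IsClosed {g : E k | ∀ y ∈ orthant k, dotp g (y - pos x) ≤ U y - U (pos x)}
    rw [hset]
    exact isClosed_biInter fun y hy => isClosed_le (hdotc (y - pos x)) continuous_const
  have hGlim : ∀ (x : E k) (xs : ℕ → E k) (gs : ℕ → E k), Tendsto xs atTop (𝓝 x) →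
      (∀ i, gs i ∈ G (xs i)) → ∀ g, Tendsto gs atTop (𝓝 g) → g ∈ G x := by
    intro x xs gs hxs hgs g hg
    refine ⟨hΓc.isClosed.mem_of_tendsto hg (Filter.Eventually.of_forall fun i => (hgs i).1), ?_⟩
    intro y hy
    have hpos : Tendsto (fun i => pos (xs i)) atTop (𝓝 (pos x)) :=
      (continuous_pos.tendsto x).comp hxs
    have h2 : Tendsto (fun i => dotp (gs i) (y - pos (xs i))) atTop
        (𝓝 (dotp g (y - pos x))) :=
      (continuous_dotp.tendsto (g, y - pos x)).comp
        (hg.prodMk_nhds (tendsto_const_nhds.sub hpos))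
    have h1 : Tendsto (fun i => U y - U (pos (xs i))) atTop (𝓝 (U y - U (pos x))) :=
      tendsto_const_nhds.sub ((hUcont.tendsto _).comp hpos)
    exact le_of_tendsto_of_tendsto' h2 h1 fun i => (hgs i).2 y hy
  -- argmax selection
  have hqex : ∀ x : E k, ∃ g ∈ G x, ∀ g' ∈ G x, dotp g' x ≤ dotp g x := by
    intro x
    obtain ⟨g, hg, hmax⟩ := (hGcpt x).exists_isMaxOn (hGne x) ((hdotc x).continuousOn)
    exact ⟨g, hg, fun g' hg' => hmax hg'⟩
  choose q hqG hqmax using hqex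
  set s : E k → ℝ := fun x => dotp (q x) x - U x with hs_def
  have hAlloc : IsAlloc Γ q := fun x _ => (hqG x).1
  have hICfin : IsIC q s := by
    intro x hx y hy
    have h1 := (hqG y).2 x hx
    rw [pos_eq hy] at h1
    have h2 := dotp_sub (q y) x y
    simp only [hs_def]
    linarith
  have hIRfin : IsIR q s := by
    intro x hx
    have := hUnn x hx
    simp only [hs_def]
    linarith
  -- bounds for s
  have hsle : ∀ x ∈ orthant k, s x ≤ L * ‖x‖ := by
    intro x hx
    have h1 := hdot_le _ ((hqG x).1) x
    have h2 := hUnn x hx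
    have h3 := le_abs_self (dotp (q x) x)
    simp only [hs_def]
    linarith
  have hUbd : ∀ x, |U x| ≤ L * ‖x‖ := by
    intro x
    have hU0 : U 0 = 0 := by
      have h0 : Tendsto (fun j => Useq (φ j) (0:E k)) atTop (𝓝 (0:ℝ)) := by
        have : (fun j => Useq (φ j) (0:E k)) = fun _ => (0:ℝ) := funext fun j => hUseq0 (φ j)
        rw [this]; exact tendsto_const_nhds
      exact tendsto_nhds_unique (hU 0) h0
    have := hUlip x 0
    rw [hU0, sub_zero, sub_zero] at this
    exact this
  have hsabs : ∀ x, |s x| ≤ 2 * L * ‖x‖ := by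
    intro x
    have h1 := hdot_le _ ((hqG x).1) x
    have h2 := hUbd x
    calc |s x| = |dotp (q x) x - U x| := rfl
      _ ≤ |dotp (q x) x| + |U x| := abs_sub_le'' _ _
      _ ≤ 2 * L * ‖x‖ := by linarith
  -- measurability of M
  set M : E k → ℝ := fun x => dotp (q x) x with hM_def
  have hMusc : ∀ r0 : ℝ, IsClosed {x | r0 ≤ M x} := by
    intro r0
    apply IsSeqClosed.isClosed
    intro xs x hxs hxlim
    obtain ⟨g, hgΓ, ψ, hψ, hgt⟩ := hΓc.tendsto_subseq (fun i => (hqG (xs i)).1)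
    have hgG : g ∈ G x := hGlim x (fun i => xs (ψ i)) (fun i => q (xs (ψ i)))
      (hxlim.comp hψ.tendsto_atTop) (fun i => hqG (xs (ψ i))) g hgt
    have hlim : Tendsto (fun i => dotp (q (xs (ψ i))) (xs (ψ i))) atTop (𝓝 (dotp g x)) :=
      (continuous_dotp.tendsto (g, x)).comp (hgt.prodMk_nhds (hxlim.comp hψ.tendsto_atTop))
    have hge : r0 ≤ dotp g x :=
      ge_of_tendsto hlim (Filter.Eventually.of_forall fun i => hxs (ψ i))
    exact hge.trans (hqmax x g hgG)
  have hMmeas : Measurable M := by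
    have husc : UpperSemicontinuous M := by
      rw [upperSemicontinuous_iff_isClosed_preimage]
      intro y
      exact hMusc y
    exact husc.measurable
  have hsmeasX : AEStronglyMeasurable (fun ω => s (X ω)) P :=
    ((hMmeas.comp hXm).sub (hUcont.measurable.comp hXm)).aestronglyMeasurable
  have hsintX : Integrable (fun ω => s (X ω)) P := by
    refine Integrable.mono (hXint.const_mul (2*L)) hsmeasX
      (Filter.Eventually.of_forall fun ω => ?_)
    rw [Real.norm_eq_abs, Real.norm_eq_abs, abs_of_nonneg (by positivity : (0:ℝ) ≤ 2*L*‖X ω‖)]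
    exact hsabs (X ω)
  -- pointwise limsup inequality
  have hptw : ∀ x ∈ orthant k, limsup (fun j => sN (φ j) x) atTop ≤ s x := by
    intro x hx
    set a := fun j => dotp (qN (φ j) x) x with ha_def
    have habd : ∀ j, |a j| ≤ L * ‖x‖ := fun j => hdot_le _ (hAl (φ j) x hx) x
    have hbd_above : IsBoundedUnder (· ≤ ·) atTop a :=
      isBoundedUnder_of ⟨L * ‖x‖, fun j => (le_abs_self _).trans (habd j)⟩
    have hbd_below : IsBoundedUnder (· ≥ ·) atTop a :=
      isBoundedUnder_of ⟨-(L * ‖x‖), fun j => (abs_le.1 (habd j)).1⟩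
    have hA1 : limsup a atTop ≤ M x := by
      by_contra hcon
      push_neg at hcon
      set b := (M x + limsup a atTop)/2 with hb_def
      have hb1 : M x < b := by rw [hb_def]; linarith
      have hb2 : b < limsup a atTop := by rw [hb_def]; linarith
      have hfreq := frequently_lt_of_lt_limsup hbd_below.isCoboundedUnder_le hb2
      obtain ⟨ψ, hψ, hψb⟩ := extraction_of_frequently_atTop hfreq
      obtain ⟨g, hgΓ, ρ2, hρ2, hgt⟩ := hΓc.tendsto_subseq
        (fun i => hAl (φ (ψ i)) x hx)
      have hgsub : ∀ y ∈ orthant k, dotp g (y - x) ≤ U y - U x :=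
        hsub_lim x hx (ψ ∘ ρ2) (hψ.comp hρ2) g hgt
      have hgG : g ∈ G x := by
        refine ⟨hgΓ, ?_⟩
        rw [pos_eq hx]
        exact hgsub
      have hfin : Tendsto (fun i => a (ψ (ρ2 i))) atTop (𝓝 (dotp g x)) :=
        ((hdotc x).tendsto g).comp hgt
      have hge : b ≤ dotp g x :=
        ge_of_tendsto hfin (Filter.Eventually.of_forall fun i => (hψb (ρ2 i)).le)
      have hle2 : dotp g x ≤ M x := hqmax x g hgG
      linarith
    have hut : Tendsto (fun j => u (φ j) x) atTop (𝓝 (U x)) := hUO x hx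
    have hsNbd_below : IsBoundedUnder (· ≥ ·) atTop (fun j => sN (φ j) x) :=
      isBoundedUnder_of ⟨-(2 * L * ‖x‖), fun j => (abs_le.1 (hsNabs (φ j) x hx)).1⟩
    have hsform : ∀ j, sN (φ j) x = a j - u (φ j) x := fun j => husN (φ j) x
    refine real_le_of_forall_pos fun ε hε => ?_
    have hev1 : ∀ᶠ j in atTop, a j < limsup a atTop + ε/2 :=
      eventually_lt_of_limsup_lt (by linarith) hbd_above
    have hev2 : ∀ᶠ j in atTop, U x - ε/2 < u (φ j) x :=
      hut.eventually (eventually_gt_nhds (by linarith))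
    have hev : ∀ᶠ j in atTop, sN (φ j) x ≤ s x + ε := by
      filter_upwards [hev1, hev2] with j h1 h2
      rw [hsform j]
      have hsx : s x = M x - U x := rfl
      calc a j - u (φ j) x ≤ (limsup a atTop + ε/2) - (U x - ε/2) := by linarith
        _ ≤ M x - U x + ε := by linarith
        _ = s x + ε := by rw [hsx]
    exact limsup_le_of_le hsNbd_below.isCoboundedUnder_le hev
  -- reverse Fatou argument
  set t : Ω → ℝ := fun ω => L * ‖X ω‖ - s (X ω) with ht_def
  have ht_nn : ∀ ω, 0 ≤ t ω := by
    intro ω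
    have := hsle (X ω) (hXpos ω)
    simp only [ht_def]
    linarith
  have ht_int : Integrable t P := hXint'.sub hsintX
  set h := fun j => fun ω => L * ‖X ω‖ - sN (φ j) (X ω) with hh_def
  have hh_nn : ∀ j ω, 0 ≤ h j ω := by
    intro j ω
    have := hsNle (φ j) (X ω) (hXpos ω)
    simp only [hh_def]
    linarith
  have hh_int : ∀ j, Integrable (h j) P := fun j => hXint'.sub (hInt (φ j))
  have hh_val : ∀ j, ∫ ω, h j ω ∂P = A - ρ (φ j) := fun j =>
    integral_sub hXint' (hInt (φ j))
  have hptwise : ∀ ω, ENNReal.ofReal (t ω) ≤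
      liminf (fun j => ENNReal.ofReal (h j ω)) atTop := by
    intro ω
    rcases eq_or_lt_of_le (zero_le : 0 ≤ ENNReal.ofReal (t ω)) with h0 | h0
    · rw [← h0]; exact zero_le
    have hiff := le_liminf_iff (f := atTop) (u := fun j => ENNReal.ofReal (h j ω))
      (x := ENNReal.ofReal (t ω))
    refine hiff.2 fun b hb => ?_
    have hbtop : b ≠ ⊤ := ne_top_of_lt (hb.trans_le le_top)
    have hbt : b.toReal < t ω := (ENNReal.lt_ofReal_iff_toReal_lt hbtop).1 hb
    set ε := t ω - b.toReal with hε_def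
    have hε : 0 < ε := by rw [hε_def]; linarith
    have hls := hptw (X ω) (hXpos ω)
    have hsNbd_above : IsBoundedUnder (· ≤ ·) atTop (fun j => sN (φ j) (X ω)) :=
      isBoundedUnder_of ⟨2 * L * ‖X ω‖,
        fun j => (le_abs_self _).trans (hsNabs (φ j) (X ω) (hXpos ω))⟩
    have hev : ∀ᶠ j in atTop, sN (φ j) (X ω) < s (X ω) + ε :=
      eventually_lt_of_limsup_lt (by linarith) hsNbd_above
    filter_upwards [hev] with j hj
    have hhj : b.toReal < h j ω := by
      show b.toReal < L * ‖X ω‖ - sN (φ j) (X ω)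
      have htω : t ω = L * ‖X ω‖ - s (X ω) := rfl
      have : b.toReal = L * ‖X ω‖ - s (X ω) - ε := by rw [hε_def, htω]; ring
      rw [this]
      linarith
    exact (ENNReal.lt_ofReal_iff_toReal_lt hbtop).2 hhj
  have key : ENNReal.ofReal (∫ ω, t ω ∂P) ≤ ENNReal.ofReal (A - rstar) := by
    calc ENNReal.ofReal (∫ ω, t ω ∂P) = ∫⁻ ω, ENNReal.ofReal (t ω) ∂P :=
        MeasureTheory.ofReal_integral_eq_lintegral_ofReal ht_int
          (Filter.Eventually.of_forall ht_nn)
      _ ≤ ∫⁻ ω, liminf (fun j => ENNReal.ofReal (h j ω)) atTop ∂P :=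
        lintegral_mono fun ω => hptwise ω
      _ ≤ liminf (fun j => ∫⁻ ω, ENNReal.ofReal (h j ω) ∂P) atTop :=
        lintegral_liminf_le' fun j =>
          ENNReal.measurable_ofReal.comp_aemeasurable (hh_int j).aemeasurable
      _ = liminf (fun j => ENNReal.ofReal (A - ρ (φ j))) atTop := by
        congr 1
        funext j
        rw [← MeasureTheory.ofReal_integral_eq_lintegral_ofReal (hh_int j)
          (Filter.Eventually.of_forall (hh_nn j)), hh_val j]
      _ = ENNReal.ofReal (A - rstar) := by
        apply Filter.Tendsto.liminf_eq
        exact (ENNReal.continuous_ofReal.tendsto _).comp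
          (tendsto_const_nhds.sub (hρtend.comp hφmono.tendsto_atTop))
  have hint_t : ∫ ω, t ω ∂P = A - ∫ ω, s (X ω) ∂P := integral_sub hXint' hsintX
  have hge2 : rstar ≤ ∫ ω, s (X ω) ∂P := by
    have h2 : 0 ≤ A - rstar := by linarith
    have := (ENNReal.ofReal_le_ofReal_iff h2).1 key
    rw [hint_t] at this
    linarith
  have hle3 : (∫ ω, s (X ω) ∂P) ≤ rstar :=
    le_csSup hSbdd ⟨q, s, hAlloc, hICfin, hIRfin, rfl⟩
  exact ⟨q, s, hAlloc, hICfin, hIRfin, le_antisymm hle3 hge2⟩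
end
end

section
/- Let b ∈ B_Γ. Then there exists an IC, IR, and NPT Γ-mechanism μ = (q,s) whose buyer payoff function equals b on ℝ_+^k (i.e., q(x)·x − s(x) = b(x) for all x ∈ ℝ_+^k) and such that q(x) ∈ ∂b(x) ∩ Γ for every x ∈ ℝ_+^k. -/
open MeasureTheory Filter

noncomputable section

/-- every `b ∈ B_Γ` is the buyer payoff function of some
IC, IR, NPT `Γ`-mechanism whose allocation is a subgradient selection of `b`. -/
theorem stmt2 {k : ℕ} (hk : 1 ≤ k) (Γ : Set (E k)) (hΓne : Γ.Nonempty)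
    (hΓc : IsCompact Γ) (hΓ : Γ ⊆ orthant k)
    (b : E k → ℝ) (hb : BClass Γ b) :
    ∃ q : E k → E k, ∃ s : E k → ℝ,
      IsAlloc Γ q ∧ IsIC q s ∧ IsIR q s ∧ IsNPT s ∧
      (∀ x ∈ orthant k, dotp (q x) x - s x = b x) ∧
      (∀ x ∈ orthant k, q x ∈ Subgrad b x ∩ Γ) := by

  obtain ⟨hconv, hb0, hsub⟩ := hb
  choose q hq using hsub
  refine ⟨q, fun x => dotp (q x) x - b x, ?_, ?_, ?_, ?_, ?_, ?_⟩
  · intro x _; exact (hq x).2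
  · intro x _ y _
    have h := (hq y).1 x
    have hd : dotp (q y) (x - y) = dotp (q y) x - dotp (q y) y := by
      simp [dotp, Finset.sum_sub_distrib, mul_sub]
    rw [hd] at h
    dsimp only
    linarith
  · intro x hx
    have h := (hq 0).1 x
    have hb0' : b 0 = 0 := hb0
    have hd : dotp (q 0) (x - 0) = dotp (q 0) x := by simp
    rw [hd, hb0'] at h
    have hpos : 0 ≤ dotp (q 0) x := by
      apply Finset.sum_nonneg
      intro i _
      exact mul_nonneg (hΓ (hq 0).2 i) (hx i)
    dsimp only
    linarith
  · intro x hx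
    have h := (hq x).1 0
    have hd : dotp (q x) (0 - x) = -dotp (q x) x := by
      simp [dotp]
    rw [hd, hb0] at h
    dsimp only
    linarith
  · intro x _; ring
  · intro x _; exact hq x
end
end

section
/- Let b_n, for n = 1,2,..., be a sequence of functions in B_Γ. Then there exists a subsequence (b_{n'}) and a function b ∈ B_Γ such that b_{n'} converges pointwise to b on all of ℝ^k, i.e., lim_{n'→∞} b_{n'}(x) = b(x) for every x ∈ ℝ^k. -/
open MeasureTheory Filter

noncomputable section

/-- sequential compactness of `B_Γ` under pointwise convergence. -/
theorem stmt5 {k : ℕ} (hk : 1 ≤ k) (Γ : Set (E k)) (hΓne : Γ.Nonempty)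
    (hΓc : IsCompact Γ) (hΓ : Γ ⊆ orthant k)
    (bn : ℕ → E k → ℝ) (hbn : ∀ n, BClass Γ (bn n)) :
    ∃ φ : ℕ → ℕ, StrictMono φ ∧ ∃ b : E k → ℝ, BClass Γ b ∧
      ∀ x : E k, Tendsto (fun n => bn (φ n) x) atTop (nhds (b x)) := by
  classical
  -- bound on Γ
  obtain ⟨C, hC⟩ := hΓc.isBounded.exists_norm_le
  set M : ℝ := max C 0 with hMdef
  have hM : 0 ≤ M := le_max_right _ _
  have hMg : ∀ g ∈ Γ, ‖g‖ ≤ M := fun g hg => (hC g hg).trans (le_max_left _ _)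
  have hdotp : ∀ g v : E k, dotp g v = (inner ℝ g v : ℝ) := by
    intro g v
    simp [dotp, PiLp.inner_apply, RCLike.inner_apply, mul_comm]
  have hdabs : ∀ g v : E k, g ∈ Γ → |dotp g v| ≤ M * ‖v‖ := by
    intro g v hg
    rw [hdotp]
    exact (abs_real_inner_le_norm g v).trans
      (mul_le_mul_of_nonneg_right (hMg g hg) (norm_nonneg _))
  -- equi-Lipschitz bound
  have key : ∀ n (x y : E k), bn n y - bn n x ≥ -(M * ‖y - x‖) := by
    intro n x y
    obtain ⟨g, hg1, hg2⟩ := (hbn n).2.2 x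
    have h1 := hg1 y
    have h2 := hdabs g (y - x) hg2
    have h3 := neg_abs_le (dotp g (y - x))
    linarith
  have key2 : ∀ n (x y : E k), |bn n y - bn n x| ≤ M * ‖y - x‖ := by
    intro n x y
    rw [abs_le]
    constructor
    · linarith [key n x y]
    · have h := key n y x
      rw [norm_sub_rev] at h
      linarith
  -- dense sequence
  haveI : Nonempty (E k) := ⟨0⟩
  set D : ℕ → E k := TopologicalSpace.denseSeq (E k) with hDdef
  have hD : DenseRange D := TopologicalSpace.denseRange_denseSeq (E k)
  -- the values at D lie in a compact product
  have hbound : ∀ n (x : E k), |bn n x| ≤ M * ‖x‖ := by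
    intro n x
    have := key2 n 0 x
    simpa [(hbn n).2.1] using this
  set S : Set (ℕ → ℝ) := Set.univ.pi (fun i => Set.Icc (-(M * ‖D i‖)) (M * ‖D i‖)) with hSdef
  have hScomp : IsCompact S := isCompact_univ_pi fun i => isCompact_Icc
  have hFS : ∀ n, (fun i => bn n (D i)) ∈ S := by
    intro n
    rw [hSdef, Set.mem_univ_pi]
    intro i
    exact abs_le.mp (hbound n (D i))
  obtain ⟨L, hLS, φ, hφ, hconv⟩ := hScomp.isSeqCompact hFS
  have hconv' : ∀ i, Tendsto (fun n => bn (φ n) (D i)) atTop (nhds (L i)) :=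
    fun i => (tendsto_pi_nhds.mp hconv) i
  -- Cauchy at every point
  have hcau : ∀ x : E k, CauchySeq (fun n => bn (φ n) x) := by
    intro x
    rw [Metric.cauchySeq_iff]
    intro ε hε
    have hM1 : (0:ℝ) < M + 1 := by linarith
    have hε' : 0 < ε / (3 * (M + 1)) := by positivity
    obtain ⟨i, hi⟩ := hD.exists_dist_lt x hε'
    have hic : CauchySeq (fun n => bn (φ n) (D i)) := (hconv' i).cauchySeq
    obtain ⟨N, hN⟩ := Metric.cauchySeq_iff.mp hic (ε / 3) (by linarith)
    refine ⟨N, fun m hm n hn => ?_⟩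
    have hd : ∀ j, dist (bn (φ j) x) (bn (φ j) (D i)) ≤ ε / 3 := by
      intro j
      rw [Real.dist_eq]
      have h1 : |bn (φ j) x - bn (φ j) (D i)| ≤ M * ‖x - D i‖ := by
        have := key2 (φ j) (D i) x
        exact this
      have h2 : ‖x - D i‖ = dist x (D i) := (dist_eq_norm x (D i)).symm
      have h3 : M * dist x (D i) ≤ M * (ε / (3 * (M + 1))) :=
        mul_le_mul_of_nonneg_left (le_of_lt hi) hM
      have h4 : M * (ε / (3 * (M + 1))) ≤ ε / 3 := by
        rw [mul_div_assoc', div_le_div_iff₀ (by positivity) (by norm_num)]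
        nlinarith
      calc |bn (φ j) x - bn (φ j) (D i)| ≤ M * ‖x - D i‖ := h1
        _ = M * dist x (D i) := by rw [h2]
        _ ≤ ε / 3 := h3.trans h4
    calc dist (bn (φ m) x) (bn (φ n) x)
        ≤ dist (bn (φ m) x) (bn (φ m) (D i)) + dist (bn (φ m) (D i)) (bn (φ n) (D i))
          + dist (bn (φ n) (D i)) (bn (φ n) x) := dist_triangle4 _ _ _ _
      _ < ε / 3 + ε / 3 + ε / 3 := by
          have := hN m hm n hn
          have h3 : dist (bn (φ n) (D i)) (bn (φ n) x) ≤ ε / 3 := by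
            rw [dist_comm]; exact hd n
          have h1 := hd m
          linarith
      _ = ε := by ring
  set b : E k → ℝ := fun x => limUnder atTop (fun n => bn (φ n) x) with hbdef
  have hbt : ∀ x, Tendsto (fun n => bn (φ n) x) atTop (nhds (b x)) := fun x =>
    (hcau x).tendsto_limUnder
  refine ⟨φ, hφ, b, ⟨?_, ?_, ?_⟩, hbt⟩
  · -- convexity
    refine ⟨convex_univ, fun x _ y _ a c ha hc hac => ?_⟩
    refine le_of_tendsto_of_tendsto' (hbt (a • x + c • y))
      (((hbt x).const_smul a).add ((hbt y).const_smul c)) (fun n => ?_)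
    exact (hbn (φ n)).1.2 (Set.mem_univ x) (Set.mem_univ y) ha hc hac
  · -- b 0 = 0
    refine tendsto_nhds_unique (hbt 0) ?_
    have : (fun n => bn (φ n) 0) = fun _ => (0:ℝ) := funext fun n => (hbn (φ n)).2.1
    rw [this]
    exact tendsto_const_nhds
  · -- subgradients
    intro x
    have hgex : ∀ n, ∃ g, g ∈ Subgrad (bn (φ n)) x ∩ Γ := fun n => (hbn (φ n)).2.2 x
    choose g hg using hgex
    have hgΓ : ∀ n, g n ∈ Γ := fun n => (hg n).2
    obtain ⟨g₀, hg₀Γ, ψ, hψ, hgconv⟩ := hΓc.isSeqCompact hgΓ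
    refine ⟨g₀, fun y => ?_, hg₀Γ⟩
    have h1 : Tendsto (fun n => bn (φ (ψ n)) y - bn (φ (ψ n)) x) atTop (nhds (b y - b x)) :=
      ((hbt y).comp hψ.tendsto_atTop).sub ((hbt x).comp hψ.tendsto_atTop)
    have h2 : Tendsto (fun n => dotp (g (ψ n)) (y - x)) atTop (nhds (dotp g₀ (y - x))) := by
      simp only [hdotp]
      exact Tendsto.inner hgconv tendsto_const_nhds
    exact le_of_tendsto_of_tendsto' h2 h1 (fun n => (hg (ψ n)).1 y)
end
end

section
/- Let μ_n = (q_n,s_n), for n = 1,2,..., and μ = (q,s) be IC, IR, and NPT Γ-mechanisms with extended buyer payoff functions b_n and b respectively. If b_n converges pointwise to b on ℝ^k and μ is seller favorable (i.e., s(x) = b′(x;x) − b(x) for all x ∈ ℝ_+^k), then limsup_{n→∞} s_n(x) ≤ s(x) for every x ∈ ℝ_+^k. -/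
open MeasureTheory Filter

noncomputable section

/- ### Auxiliary lemmas -/

lemma dotp_add' {k : ℕ} (g u v : E k) : dotp g (u + v) = dotp g u + dotp g v := by
  simp [dotp, mul_add, Finset.sum_add_distrib]

lemma dotp_smul' {k : ℕ} (g : E k) (c : ℝ) (u : E k) : dotp g (c • u) = c * dotp g u := by
  simp [dotp, Finset.mul_sum, mul_left_comm]

lemma orthant_ne (k : ℕ) : (orthant k).Nonempty := ⟨0, fun i => by simp⟩

lemma payoff_bddAbove {k : ℕ} {Γ : Set (E k)} (hΓc : IsCompact Γ)
    {q : E k → E k} {s : E k → ℝ} (hq : IsAlloc Γ q) (hNPT : IsNPT s) (x : E k) :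
    BddAbove ((fun z => dotp (q z) x - s z) '' orthant k) := by
  have hcont : Continuous fun w : E k => dotp w x := by unfold dotp; fun_prop
  obtain ⟨M, hM⟩ := (hΓc.image hcont).bddAbove
  refine ⟨M, ?_⟩
  rintro _ ⟨z, hz, rfl⟩
  have h1 : dotp (q z) x ≤ M := hM (Set.mem_image_of_mem _ (hq z hz))
  have h2 := hNPT z hz
  simpa using sub_le_sub h1 h2

lemma payoff_eq {k : ℕ} {q : E k → E k} {s : E k → ℝ} (hIC : IsIC q s)
    {x : E k} (hx : x ∈ orthant k) :
    extPayoff q s x = dotp (q x) x - s x := by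
  refine IsGreatest.csSup_eq ⟨⟨x, hx, rfl⟩, ?_⟩
  rintro _ ⟨z, hz, rfl⟩
  exact hIC x hx z hz

lemma payoff_le {k : ℕ} {Γ : Set (E k)} (hΓc : IsCompact Γ)
    {q : E k → E k} {s : E k → ℝ} (hq : IsAlloc Γ q) (hNPT : IsNPT s)
    {z : E k} (hz : z ∈ orthant k) (y : E k) :
    dotp (q z) y - s z ≤ extPayoff q s y :=
  le_csSup (payoff_bddAbove hΓc hq hNPT y) ⟨z, hz, rfl⟩

/-- subgradient inequality for the payoff function -/
lemma payoff_subgrad {k : ℕ} {Γ : Set (E k)} (hΓc : IsCompact Γ)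
    {q : E k → E k} {s : E k → ℝ} (hq : IsAlloc Γ q) (hIC : IsIC q s) (hNPT : IsNPT s)
    {x : E k} (hx : x ∈ orthant k) (y : E k) :
    extPayoff q s x + (dotp (q x) y - dotp (q x) x) ≤ extPayoff q s y := by
  have h1 := payoff_le hΓc hq hNPT hx y
  rw [payoff_eq hIC hx]
  linarith

/-- convexity inequality for the payoff function -/
lemma payoff_convex {k : ℕ} {Γ : Set (E k)} (hΓc : IsCompact Γ)
    {q : E k → E k} {s : E k → ℝ} (hq : IsAlloc Γ q) (hNPT : IsNPT s)
    (u v : E k) {a c : ℝ} (ha : 0 ≤ a) (hc : 0 ≤ c) (hac : a + c = 1) :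
    extPayoff q s (a • u + c • v) ≤ a * extPayoff q s u + c * extPayoff q s v := by
  refine csSup_le ((orthant_ne k).image _) ?_
  rintro _ ⟨z, hz, rfl⟩
  have h1 := payoff_le hΓc hq hNPT hz u
  have h2 := payoff_le hΓc hq hNPT hz v
  have hd : dotp (q z) (a • u + c • v) = a * dotp (q z) u + c * dotp (q z) v := by
    rw [dotp_add', dotp_smul', dotp_smul']
  simp only
  rw [hd]
  have e1 := mul_le_mul_of_nonneg_left h1 ha
  have e2 := mul_le_mul_of_nonneg_left h2 hc
  rw [mul_sub] at e1 e2
  have e3 : a * s z + c * s z = s z := by rw [← add_mul, hac, one_mul]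
  linarith

/-- if the buyer payoff functions of IC, IR, NPT mechanisms `μₙ`
converge pointwise to the buyer payoff function of a seller-favorable IC, IR, NPT
mechanism `μ`, then `limsup sₙ(x) ≤ s(x)` for every `x ∈ ℝ₊^k`. -/
theorem stmt6 {k : ℕ} (hk : 1 ≤ k) (Γ : Set (E k)) (hΓne : Γ.Nonempty)
    (hΓc : IsCompact Γ) (hΓ : Γ ⊆ orthant k)
    (qn : ℕ → E k → E k) (sn : ℕ → E k → ℝ)
    (hqn : ∀ n, IsAlloc Γ (qn n)) (hICn : ∀ n, IsIC (qn n) (sn n))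
    (hIRn : ∀ n, IsIR (qn n) (sn n)) (hNPTn : ∀ n, IsNPT (sn n))
    (q : E k → E k) (s : E k → ℝ)
    (hq : IsAlloc Γ q) (hIC : IsIC q s) (hIR : IsIR q s) (hNPT : IsNPT s)
    (hconv : ∀ x : E k,
      Tendsto (fun n => extPayoff (qn n) (sn n) x) atTop (nhds (extPayoff q s x)))
    (hSF : SellerFavorable q s) :
    ∀ x ∈ orthant k, limsup (fun n => sn n x) atTop ≤ s x := by
  intro x hx
  set b : E k → ℝ := extPayoff q s with hb
  set bn : ℕ → E k → ℝ := fun n => extPayoff (qn n) (sn n) with hbn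
  -- the difference-quotient function
  set φ : ℝ → ℝ := fun δ => (b (x + δ • x) - b x) / δ with hφ
  -- φ is bounded below on Ioi 0 by dotp (q x) x
  have hφ_lb : ∀ δ ∈ Set.Ioi (0:ℝ), dotp (q x) x ≤ φ δ := by
    intro δ hδ
    have hδ0 : (0:ℝ) < δ := hδ
    have h := payoff_subgrad hΓc hq hIC hNPT hx (x + δ • x)
    have hd : dotp (q x) (x + δ • x) = dotp (q x) x + δ * dotp (q x) x := by
      rw [dotp_add', dotp_smul']
    rw [hd] at h
    simp only [hφ]
    rw [le_div_iff₀ hδ0]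
    linarith
  have hφ_bdd : BddBelow (φ '' Set.Ioi 0) := by
    refine ⟨dotp (q x) x, ?_⟩
    rintro _ ⟨δ, hδ, rfl⟩
    exact hφ_lb δ hδ
  -- φ is monotone on Ioi 0
  have hφ_mono : MonotoneOn φ (Set.Ioi 0) := by
    intro δ₁ hδ₁ δ₂ hδ₂ hle
    rcases eq_or_lt_of_le hle with rfl | hlt
    · exact le_rfl
    have hδ₁0 : (0:ℝ) < δ₁ := hδ₁
    have hδ₂0 : (0:ℝ) < δ₂ := hδ₂
    set t : ℝ := δ₁ / δ₂ with ht
    have ht0 : 0 ≤ t := le_of_lt (div_pos hδ₁0 hδ₂0)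
    have ht1 : t ≤ 1 := (div_le_one hδ₂0).2 hle
    have htδ : t * δ₂ = δ₁ := div_mul_cancel₀ _ (ne_of_gt hδ₂0)
    have harg : (1 - t) • x + t • (x + δ₂ • x) = x + δ₁ • x := by
      rw [smul_add, smul_smul, htδ, sub_smul, one_smul]
      abel
    have hkey : b (x + δ₁ • x) ≤ (1 - t) * b x + t * b (x + δ₂ • x) := by
      rw [← harg]
      exact payoff_convex hΓc hq hNPT x (x + δ₂ • x) (by linarith) ht0 (by ring)
    simp only [hφ]
    rw [div_le_div_iff₀ hδ₁0 hδ₂0]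
    have h3 := mul_le_mul_of_nonneg_right hkey (le_of_lt hδ₂0)
    have h4 : ((1 - t) * b x + t * b (x + δ₂ • x)) * δ₂
        = b x * δ₂ - δ₁ * b x + δ₁ * b (x + δ₂ • x) := by rw [← htδ]; ring
    rw [h4] at h3
    linarith
  -- the one-sided derivative equals the infimum of φ on Ioi 0
  have hTend : Tendsto φ (nhdsWithin (0:ℝ) (Set.Ioi 0)) (nhds (sInf (φ '' Set.Ioi 0))) := by
    have := hφ_mono.tendsto_nhdsGT hφ_bdd
    simpa using this
  have hdd : dirDeriv b x x = sInf (φ '' Set.Ioi 0) := by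
    exact Tendsto.limUnder_eq hTend
  -- now bound the limsup
  have hlimsup_le : ∀ δ ∈ Set.Ioi (0:ℝ),
      limsup (fun n => sn n x) atTop ≤ φ δ - b x := by
    intro δ hδ
    have hδ0 : (0:ℝ) < δ := hδ
    -- the majorant sequence
    set u : ℕ → ℝ := fun n => (bn n (x + δ • x) - bn n x) / δ - bn n x with hu
    have hle : ∀ n, sn n x ≤ u n := by
      intro n
      have hsg := payoff_subgrad hΓc (hqn n) (hICn n) (hNPTn n) hx (x + δ • x)
      have hd : dotp (qn n x) (x + δ • x) = dotp (qn n x) x + δ * dotp (qn n x) x := by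
        rw [dotp_add', dotp_smul']
      rw [hd] at hsg
      have hval : bn n x = dotp (qn n x) x - sn n x := payoff_eq (hICn n) hx
      have hq_le : dotp (qn n x) x ≤ (bn n (x + δ • x) - bn n x) / δ := by
        rw [le_div_iff₀ hδ0]; linarith
      rw [hu]
      have : sn n x = dotp (qn n x) x - bn n x := by rw [hval]; ring
      rw [this]
      linarith
    have hu_tend : Tendsto u atTop (nhds (φ δ - b x)) := by
      have h1 := hconv (x + δ • x)
      have h2 := hconv x
      exact Tendsto.sub (Tendsto.div_const (Tendsto.sub h1 h2) δ) h2
    have hcob : IsCoboundedUnder (· ≤ ·) atTop (fun n => sn n x) :=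
      isCoboundedUnder_le_of_le atTop (fun n => hNPTn n x hx)
    have hbdd : IsBoundedUnder (· ≤ ·) atTop u := hu_tend.isBoundedUnder_le
    calc limsup (fun n => sn n x) atTop ≤ limsup u atTop :=
          limsup_le_limsup (Eventually.of_forall hle) hcob hbdd
      _ = φ δ - b x := hu_tend.limsup_eq
  -- conclude
  have hs : s x = dirDeriv b x x - b x := hSF x hx
  rw [hs, hdd]
  have : limsup (fun n => sn n x) atTop + b x ≤ sInf (φ '' Set.Ioi 0) := by
    refine le_csInf (⟨φ 1, 1, by norm_num, rfl⟩) ?_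
    rintro _ ⟨δ, hδ, rfl⟩
    have := hlimsup_le δ hδ
    linarith
  linarith
end
end

section
/- For every nonempty compact set of possible allocations Γ ⊆ ℝ_+^k and every random valuation X with values in ℝ_+^k that has finite expectation, there exists a monotonic IC and IR Γ-mechanism μ = (q,s) attaining the optimal monotonic revenue, i.e., E[s(X)] = MonRev_Γ(X) := sup over all monotonic IC and IR Γ-mechanisms μ' = (q',s') of E[s'(X)]. -/
open MeasureTheory Filter

noncomputable section

/-- A monotonic mechanism: payments nondecreasing in the (coordinatewise) valuation. -/
def MonotonicPay {k : ℕ} (s : E k → ℝ) : Prop :=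
  ∀ x ∈ orthant k, ∀ y ∈ orthant k, (∀ i, x i ≤ y i) → s x ≤ s y

open Topology

namespace S8

variable {k : ℕ}

lemma zero_mem_orthant : (0 : E k) ∈ orthant k := fun i => by simp

lemma dotp_eq_inner (g x : E k) : dotp g x = (inner ℝ g x : ℝ) := by
  simp [dotp, PiLp.inner_apply, RCLike.inner_apply, conj_trivial, mul_comm]

lemma abs_dotp_le {C : ℝ} {g : E k} (hg : ‖g‖ ≤ C) (x : E k) : |dotp g x| ≤ C * ‖x‖ := by
  rw [dotp_eq_inner]
  calc |(inner ℝ g x : ℝ)| ≤ ‖g‖ * ‖x‖ := abs_real_inner_le_norm g x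
    _ ≤ C * ‖x‖ := mul_le_mul_of_nonneg_right hg (norm_nonneg _)

lemma dotp_le {C : ℝ} {g : E k} (hg : ‖g‖ ≤ C) (x : E k) : dotp g x ≤ C * ‖x‖ :=
  (le_abs_self _).trans (abs_dotp_le hg x)

lemma neg_le_dotp {C : ℝ} {g : E k} (hg : ‖g‖ ≤ C) (x : E k) : -(C * ‖x‖) ≤ dotp g x :=
  (abs_le.mp (abs_dotp_le hg x)).1

lemma dotp_sub (g x y : E k) : dotp g (x - y) = dotp g x - dotp g y := by
  simp [dotp, mul_sub, Finset.sum_sub_distrib]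

lemma dotp_zero_right (g : E k) : dotp g 0 = 0 := by simp [dotp]

lemma dotp_nonneg {g x : E k} (hg : g ∈ orthant k) (hx : x ∈ orthant k) : 0 ≤ dotp g x :=
  Finset.sum_nonneg fun i _ => mul_nonneg (hg i) (hx i)

lemma tendsto_dotp {gs : ℕ → E k} {g : E k} (h : Tendsto gs atTop (𝓝 g)) (x : E k) :
    Tendsto (fun n => dotp (gs n) x) atTop (𝓝 (dotp g x)) := by
  have := Filter.Tendsto.inner (𝕜 := ℝ) h (tendsto_const_nhds (x := x))
  simpa [dotp_eq_inner] using this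

section Mech

variable {Γ : Set (E k)} {C : ℝ} {q : E k → E k} {s : E k → ℝ}

lemma elem_le (hq : IsAlloc Γ q) (hC : ∀ g ∈ Γ, ‖g‖ ≤ C) (hs : IsNPT s)
    {z : E k} (hz : z ∈ orthant k) (y : E k) : dotp (q z) y - s z ≤ C * ‖y‖ := by
  have h1 := dotp_le (hC _ (hq z hz)) y
  have h2 := hs z hz
  linarith

lemma img_nonempty (q : E k → E k) (s : E k → ℝ) (y : E k) :
    ((fun z => dotp (q z) y - s z) '' orthant k).Nonempty :=
  ⟨_, Set.mem_image_of_mem _ zero_mem_orthant⟩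

lemma img_bddAbove (hq : IsAlloc Γ q) (hC : ∀ g ∈ Γ, ‖g‖ ≤ C) (hs : IsNPT s) (y : E k) :
    BddAbove ((fun z => dotp (q z) y - s z) '' orthant k) := by
  refine ⟨C * ‖y‖, ?_⟩
  rintro _ ⟨z, hz, rfl⟩
  exact elem_le hq hC hs hz y

lemma le_ext (hq : IsAlloc Γ q) (hC : ∀ g ∈ Γ, ‖g‖ ≤ C) (hs : IsNPT s)
    {x : E k} (hx : x ∈ orthant k) (y : E k) :
    dotp (q x) y - s x ≤ extPayoff q s y :=
  le_csSup (img_bddAbove hq hC hs y) ⟨x, hx, rfl⟩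

lemma ext_le (hq : IsAlloc Γ q) (hC : ∀ g ∈ Γ, ‖g‖ ≤ C) (hs : IsNPT s) (y : E k) :
    extPayoff q s y ≤ C * ‖y‖ := by
  refine csSup_le (img_nonempty q s y) ?_
  rintro _ ⟨z, hz, rfl⟩
  exact elem_le hq hC hs hz y

lemma ext_lb (hq : IsAlloc Γ q) (hC : ∀ g ∈ Γ, ‖g‖ ≤ C) (hs : IsNPT s) (h0 : s 0 = 0)
    (y : E k) : -(C * ‖y‖) ≤ extPayoff q s y := by
  have h1 := le_ext hq hC hs zero_mem_orthant y
  have h2 := neg_le_dotp (hC _ (hq 0 zero_mem_orthant)) y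
  rw [h0] at h1
  linarith

lemma ext_truth (hIC : IsIC q s) {x : E k} (hx : x ∈ orthant k) :
    extPayoff q s x = dotp (q x) x - s x := by
  refine IsGreatest.csSup_eq ⟨⟨x, hx, rfl⟩, ?_⟩
  rintro _ ⟨z, hz, rfl⟩
  exact hIC x hx z hz

lemma ext_subgrad (hq : IsAlloc Γ q) (hC : ∀ g ∈ Γ, ‖g‖ ≤ C) (hs : IsNPT s) (hIC : IsIC q s)
    {x : E k} (hx : x ∈ orthant k) (y : E k) :
    dotp (q x) (y - x) + extPayoff q s x ≤ extPayoff q s y := by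
  have h1 := le_ext hq hC hs hx y
  rw [ext_truth hIC hx, dotp_sub]
  linarith

lemma ext_nonneg (hq : IsAlloc Γ q) (hΓor : Γ ⊆ orthant k) (hC : ∀ g ∈ Γ, ‖g‖ ≤ C)
    (hs : IsNPT s) (h0 : s 0 = 0) {x : E k} (hx : x ∈ orthant k) :
    0 ≤ extPayoff q s x := by
  have h1 := le_ext hq hC hs zero_mem_orthant x
  have h2 := dotp_nonneg (hΓor (hq 0 zero_mem_orthant)) hx
  rw [h0] at h1
  linarith

lemma ext_lip (hq : IsAlloc Γ q) (hC : ∀ g ∈ Γ, ‖g‖ ≤ C) (hs : IsNPT s) (y z : E k) :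
    extPayoff q s y ≤ extPayoff q s z + C * ‖y - z‖ := by
  refine csSup_le (img_nonempty q s y) ?_
  rintro _ ⟨w, hw, rfl⟩
  dsimp only
  have h1 := le_ext hq hC hs hw z
  have h2 := dotp_le (hC _ (hq w hw)) (y - z)
  have h3 : dotp (q w) (y - z) = dotp (q w) y - dotp (q w) z := dotp_sub _ _ _
  linarith

lemma pay_le (hq : IsAlloc Γ q) (hC : ∀ g ∈ Γ, ‖g‖ ≤ C) (hIR : IsIR q s)
    {x : E k} (hx : x ∈ orthant k) : s x ≤ C * ‖x‖ := by
  have h1 := hIR x hx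
  have h2 := dotp_le (hC _ (hq x hx)) x
  linarith

lemma npt (hM : MonotonicPay s) (h0 : s 0 = 0) : IsNPT s := by
  intro x hx
  have := hM 0 zero_mem_orthant x hx (fun i => by simpa using hx i)
  rwa [h0] at this

end Mech

lemma exists_subseq_tendsto_limsup {v : ℕ → ℝ} {M : ℝ} (h0 : ∀ j, 0 ≤ v j) (hM : ∀ j, v j ≤ M) :
    ∃ ψ : ℕ → ℕ, StrictMono ψ ∧
      Tendsto (fun j => v (ψ j)) atTop (𝓝 (limsup v atTop)) := by
  set L := limsup v atTop with hL
  have hbdd : IsBoundedUnder (· ≤ ·) atTop v := isBoundedUnder_of ⟨M, hM⟩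
  have hbdd' : IsBoundedUnder (· ≥ ·) atTop v := isBoundedUnder_of ⟨0, h0⟩
  have hco : IsCoboundedUnder (· ≤ ·) atTop v := hbdd'.isCoboundedUnder_le
  have hfreq : ∀ m : ℕ, ∃ᶠ j in atTop, |v j - L| < 1 / (m + 1) := by
    intro m
    have hpos : (0:ℝ) < 1 / (m+1) := by positivity
    have h1 : ∃ᶠ j in atTop, L - 1/(m+1) < v j :=
      frequently_lt_of_lt_limsup hco (by linarith)
    have h2 : ∀ᶠ j in atTop, v j < L + 1/(m+1) :=
      eventually_lt_of_limsup_lt (by linarith) hbdd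
    refine (h1.and_eventually h2).mono ?_
    rintro j ⟨hj1, hj2⟩
    rw [abs_lt]
    constructor <;> linarith
  obtain ⟨ψ, hψ, h⟩ := extraction_forall_of_frequently hfreq
  refine ⟨ψ, hψ, ?_⟩
  have hlow : Tendsto (fun m : ℕ => L - 1/(m+1)) atTop (𝓝 L) := by
    simpa using tendsto_one_div_add_atTop_nhds_zero_nat.const_sub L
  have hhigh : Tendsto (fun m : ℕ => L + 1/(m+1)) atTop (𝓝 L) := by
    simpa using tendsto_one_div_add_atTop_nhds_zero_nat.const_add L
  refine tendsto_of_tendsto_of_tendsto_of_le_of_le hlow hhigh ?_ ?_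
  · intro m
    have := (abs_lt.mp (h m)).1
    dsimp only
    linarith
  · intro m
    have := (abs_lt.mp (h m)).2
    dsimp only
    linarith

lemma limsup_ofReal {v : ℕ → ℝ} {M : ℝ} (h0 : ∀ j, 0 ≤ v j) (hM : ∀ j, v j ≤ M) :
    limsup (fun j => ENNReal.ofReal (v j)) atTop = ENNReal.ofReal (limsup v atTop) := by
  have hmono : Monotone ENNReal.ofReal := fun a b hab => ENNReal.ofReal_le_ofReal hab
  have := hmono.map_limsup_of_continuousAt (F := atTop) v
    (ENNReal.continuous_ofReal.continuousAt)
    (isBoundedUnder_of ⟨M, hM⟩)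
    ((isBoundedUnder_of ⟨0, h0⟩).isCoboundedUnder_le)
  exact this.symm

end S8

/-- existence of a revenue-maximizing monotonic IC and IR mechanism. -/
theorem stmt8 {k : ℕ} (hk : 1 ≤ k) (Γ : Set (E k)) (hΓne : Γ.Nonempty)
    (hΓc : IsCompact Γ) (hΓ : Γ ⊆ orthant k)
    {Ω : Type*} [MeasurableSpace Ω] (P : Measure Ω) [IsProbabilityMeasure P]
    (X : Ω → E k) (hXm : Measurable X) (hXpos : ∀ ω, X ω ∈ orthant k)
    (hXint : Integrable (fun ω => ‖X ω‖) P) :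
    ∃ q : E k → E k, ∃ s : E k → ℝ,
      IsAlloc Γ q ∧ IsIC q s ∧ IsIR q s ∧ MonotonicPay s ∧
      (∫ ω, s (X ω) ∂P) =
        sSup {r : ℝ | ∃ q' : E k → E k, ∃ s' : E k → ℝ,
          IsAlloc Γ q' ∧ IsIC q' s' ∧ IsIR q' s' ∧ MonotonicPay s' ∧
          r = ∫ ω, s' (X ω) ∂P} := by
  classical
  obtain ⟨γ0, hγ0⟩ := hΓne
  obtain ⟨C0, hC0⟩ : ∃ C0 : ℝ, ∀ g ∈ Γ, ‖g‖ ≤ C0 :=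
    isBounded_iff_forall_norm_le.mp hΓc.isBounded
  set C : ℝ := max C0 0 with hCdef
  have hC : ∀ g ∈ Γ, ‖g‖ ≤ C := fun g hg => (hC0 g hg).trans (le_max_left _ _)
  have hCnn : 0 ≤ C := le_max_right _ _
  set S : Set ℝ := {r : ℝ | ∃ q' : E k → E k, ∃ s' : E k → ℝ,
      IsAlloc Γ q' ∧ IsIC q' s' ∧ IsIR q' s' ∧ MonotonicPay s' ∧
      r = ∫ ω, s' (X ω) ∂P} with hSdef
  have h0S : (0:ℝ) ∈ S := by
    refine ⟨fun _ => γ0, fun _ => 0, fun x _ => hγ0, fun x _ y _ => le_refl _, ?_,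
      fun x _ y _ _ => le_refl _, by simp⟩
    intro x hx
    simpa using S8.dotp_nonneg (hΓ hγ0) hx
  have hXint' : Integrable (fun ω => C * ‖X ω‖) P := hXint.const_mul C
  have hSbdd : BddAbove S := by
    refine ⟨C * ∫ ω, ‖X ω‖ ∂P, ?_⟩
    rintro r ⟨q', s', hq', hIC', hIR', hM', rfl⟩
    have hle : ∀ ω, s' (X ω) ≤ C * ‖X ω‖ := fun ω => S8.pay_le hq' hC hIR' (hXpos ω)
    by_cases hint : Integrable (fun ω => s' (X ω)) P
    · calc ∫ ω, s' (X ω) ∂P ≤ ∫ ω, C * ‖X ω‖ ∂P := integral_mono hint hXint' hle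
        _ = C * ∫ ω, ‖X ω‖ ∂P := integral_const_mul C _
    · rw [integral_undef hint]
      exact mul_nonneg hCnn (integral_nonneg fun ω => norm_nonneg _)
  set R : ℝ := sSup S with hRdef
  have hR0 : 0 ≤ R := le_csSup hSbdd h0S
  have hseq : ∀ n : ℕ, ∃ q : E k → E k, ∃ s : E k → ℝ,
      IsAlloc Γ q ∧ IsIC q s ∧ IsIR q s ∧ MonotonicPay s ∧ s 0 = 0 ∧
      Integrable (fun ω => s (X ω)) P ∧
      R - 1/(n+1) < ∫ ω, s (X ω) ∂P ∧ ∫ ω, s (X ω) ∂P ≤ R := by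
    intro n
    have hpos : (0:ℝ) < 1/(n+1) := by positivity
    obtain ⟨r, hrS, hr⟩ := exists_lt_of_lt_csSup ⟨0, h0S⟩
      (show R - 1/(n+1) < sSup S by rw [← hRdef]; linarith)
    obtain ⟨q', s', hq', hIC', hIR', hM', rfl⟩ := hrS
    by_cases hint : Integrable (fun ω => s' (X ω)) P
    · have hs'0 : s' 0 ≤ 0 := by
        have := hIR' 0 S8.zero_mem_orthant
        rw [S8.dotp_zero_right] at this
        linarith
      have hIC'' : IsIC q' (fun x => s' x - s' 0) := by
        intro x hx y hy
        have := hIC' x hx y hy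
        show dotp (q' x) x - (s' x - s' 0) ≥ dotp (q' y) x - (s' y - s' 0)
        linarith
      have hIR'' : IsIR q' (fun x => s' x - s' 0) := by
        intro x hx
        have h1 := hIC' x hx 0 S8.zero_mem_orthant
        have h2 := S8.dotp_nonneg (hΓ (hq' 0 S8.zero_mem_orthant)) hx
        show 0 ≤ dotp (q' x) x - (s' x - s' 0)
        linarith
      have hM'' : MonotonicPay (fun x => s' x - s' 0) := by
        intro x hx y hy hxy
        have := hM' x hx y hy hxy
        show s' x - s' 0 ≤ s' y - s' 0
        linarith
      have hint'' : Integrable (fun ω => s' (X ω) - s' 0) P :=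
        hint.sub (integrable_const (s' 0))
      have hval : ∫ ω, (s' (X ω) - s' 0) ∂P = (∫ ω, s' (X ω) ∂P) - s' 0 := by
        rw [integral_sub hint (integrable_const _), integral_const]
        simp
      have hmem'' : (∫ ω, (s' (X ω) - s' 0) ∂P) ∈ S :=
        ⟨q', fun x => s' x - s' 0, hq', hIC'', hIR'', hM'', rfl⟩
      refine ⟨q', fun x => s' x - s' 0, hq', hIC'', hIR'', hM'', by simp, hint'', ?_, ?_⟩
      · rw [hval]; linarith
      · exact le_csSup hSbdd hmem''
    · rw [integral_undef hint] at hr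
      refine ⟨fun _ => γ0, fun _ => 0, fun x _ => hγ0, fun x _ y _ => le_refl _, ?_,
        fun x _ y _ _ => le_refl _, rfl, by simpa using integrable_const (0:ℝ), ?_, ?_⟩
      · intro x hx
        simpa using S8.dotp_nonneg (hΓ hγ0) hx
      · simpa using hr
      · simpa using hR0
  choose qn sn hAll hICn hIRn hMn h0n hintn hlow hup using hseq
  have hrtend : Tendsto (fun n => ∫ ω, sn n (X ω) ∂P) atTop (𝓝 R) := by
    refine tendsto_of_tendsto_of_tendsto_of_le_of_le
      (g := fun n : ℕ => R - 1/(n+1)) (h := fun _ : ℕ => R) ?_ tendsto_const_nhds ?_ ?_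
    · simpa using tendsto_one_div_add_atTop_nhds_zero_nat.const_sub R
    · intro n; exact (hlow n).le
    · intro n; exact hup n
  have hNPT : ∀ n, IsNPT (sn n) := fun n => S8.npt (hMn n) (h0n n)
  have hsle : ∀ n, ∀ x ∈ orthant k, sn n x ≤ C * ‖x‖ :=
    fun n x hx => S8.pay_le (hAll n) hC (hIRn n) hx
  have hb_ub : ∀ n y, extPayoff (qn n) (sn n) y ≤ C * ‖y‖ :=
    fun n y => S8.ext_le (hAll n) hC (hNPT n) y
  have hb_lb : ∀ n y, -(C * ‖y‖) ≤ extPayoff (qn n) (sn n) y :=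
    fun n y => S8.ext_lb (hAll n) hC (hNPT n) (h0n n) y
  have hb_truth : ∀ n, ∀ x ∈ orthant k, extPayoff (qn n) (sn n) x = dotp (qn n x) x - sn n x :=
    fun n x hx => S8.ext_truth (hICn n) hx
  have hb_sub : ∀ n, ∀ x ∈ orthant k, ∀ y,
      dotp (qn n x) (y - x) + extPayoff (qn n) (sn n) x ≤ extPayoff (qn n) (sn n) y :=
    fun n x hx y => S8.ext_subgrad (hAll n) hC (hNPT n) (hICn n) hx y
  have hb_nonneg : ∀ n, ∀ x ∈ orthant k, 0 ≤ extPayoff (qn n) (sn n) x :=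
    fun n x hx => S8.ext_nonneg (hAll n) hΓ hC (hNPT n) (h0n n) hx
  have hb_lip : ∀ n y z, extPayoff (qn n) (sn n) y ≤ extPayoff (qn n) (sn n) z + C * ‖y - z‖ :=
    fun n y z => S8.ext_lip (hAll n) hC (hNPT n) y z
  obtain ⟨u, hu⟩ := TopologicalSpace.exists_dense_seq (E k)
  obtain ⟨L, -, φ, hφ, hφt⟩ := (isCompact_univ_pi fun d : ℕ =>
      isCompact_Icc (a := -(C * ‖u d‖)) (b := C * ‖u d‖)).tendsto_subseq
      (x := fun n => fun d => extPayoff (qn n) (sn n) (u d))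
      (fun n => Set.mem_univ_pi.mpr fun d => ⟨hb_lb n (u d), hb_ub n (u d)⟩)
  have hφt' : ∀ d, Tendsto (fun j => extPayoff (qn (φ j)) (sn (φ j)) (u d)) atTop (𝓝 (L d)) := by
    rw [tendsto_pi_nhds] at hφt
    intro d
    exact hφt d
  have hbconv : ∀ x : E k, ∃ B : ℝ,
      Tendsto (fun j => extPayoff (qn (φ j)) (sn (φ j)) x) atTop (𝓝 B) := by
    intro x
    apply cauchySeq_tendsto_of_complete
    rw [Metric.cauchySeq_iff]
    intro ε hε
    obtain ⟨d, hd⟩ := hu.exists_dist_lt x (show (0:ℝ) < ε / (4 * (C+1)) by positivity)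
    obtain ⟨N, hN⟩ := Metric.cauchySeq_iff.mp (hφt' d).cauchySeq (ε/2) (by positivity)
    refine ⟨N, fun m hm n hn => ?_⟩
    have keylip : ∀ j, |extPayoff (qn j) (sn j) x - extPayoff (qn j) (sn j) (u d)|
        ≤ C * ‖x - u d‖ := by
      intro j
      rw [abs_le]
      constructor
      · have h1 := hb_lip j (u d) x
        have h2 : ‖u d - x‖ = ‖x - u d‖ := norm_sub_rev _ _
        rw [h2] at h1
        linarith
      · have h1 := hb_lip j x (u d)
        linarith
    have hCd : C * ‖x - u d‖ < ε / 4 := by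
      have hx1 : ‖x - u d‖ < ε / (4 * (C+1)) := by rwa [dist_eq_norm] at hd
      have h1 : C * ‖x - u d‖ ≤ (C+1) * ‖x - u d‖ := by nlinarith [norm_nonneg (x - u d)]
      have h2 : (C+1) * ‖x - u d‖ < (C+1) * (ε / (4*(C+1))) :=
        mul_lt_mul_of_pos_left hx1 (by linarith)
      have h3 : (C+1) * (ε / (4*(C+1))) = ε / 4 := by
        field_simp
      linarith
    have hdN := hN m hm n hn
    rw [Real.dist_eq] at hdN ⊢
    have t1 := keylip (φ m)
    have t2 := keylip (φ n)
    have tri : |extPayoff (qn (φ m)) (sn (φ m)) x - extPayoff (qn (φ n)) (sn (φ n)) x| ≤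
        |extPayoff (qn (φ m)) (sn (φ m)) x - extPayoff (qn (φ m)) (sn (φ m)) (u d)| +
        (|extPayoff (qn (φ m)) (sn (φ m)) (u d) - extPayoff (qn (φ n)) (sn (φ n)) (u d)| +
         |extPayoff (qn (φ n)) (sn (φ n)) (u d) - extPayoff (qn (φ n)) (sn (φ n)) x|) :=
      (abs_sub_le _ _ _).trans (by
        gcongr
        exact abs_sub_le _ _ _)
    have t3 : |extPayoff (qn (φ n)) (sn (φ n)) (u d) - extPayoff (qn (φ n)) (sn (φ n)) x|
        = |extPayoff (qn (φ n)) (sn (φ n)) x - extPayoff (qn (φ n)) (sn (φ n)) (u d)| :=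
      abs_sub_comm _ _
    rw [t3] at tri
    linarith
  choose b hbt using hbconv
  have hb0 : ∀ x ∈ orthant k, 0 ≤ b x := fun x hx =>
    ge_of_tendsto' (hbt x) fun j => hb_nonneg (φ j) x hx
  set sStar : E k → ℝ := fun x => limsup (fun j => sn (φ j) x) atTop with hsStar
  have hsStar_ub : ∀ x ∈ orthant k, sStar x ≤ C * ‖x‖ := by
    intro x hx
    rw [hsStar]
    have hbd : IsBoundedUnder (· ≥ ·) atTop (fun j => sn (φ j) x) :=
      isBoundedUnder_of ⟨0, fun j => hNPT (φ j) x hx⟩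
    exact limsup_le_of_le hbd.isCoboundedUnder_le
      (Eventually.of_forall fun j => hsle (φ j) x hx)
  have hsStar_lb : ∀ x ∈ orthant k, 0 ≤ sStar x := by
    intro x hx
    rw [hsStar]
    exact le_limsup_of_frequently_le (Frequently.of_forall fun j => hNPT (φ j) x hx)
      (isBoundedUnder_of ⟨C * ‖x‖, fun j => hsle (φ j) x hx⟩)
  have key : ∀ x, x ∈ orthant k → ∃ g, g ∈ Γ ∧ sStar x = dotp g x - b x ∧
      ∀ y, dotp g (y - x) + b x ≤ b y := by
    intro x hx
    obtain ⟨ψ, hψ, hψt⟩ := S8.exists_subseq_tendsto_limsup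
      (v := fun j => sn (φ j) x) (M := C * ‖x‖)
      (fun j => hNPT (φ j) x hx) (fun j => hsle (φ j) x hx)
    obtain ⟨g, hgΓ, ψ₂, hψ₂, hgt⟩ := hΓc.tendsto_subseq (x := fun j => qn (φ (ψ j)) x)
      (fun j => hAll (φ (ψ j)) x hx)
    have hmono2 : StrictMono fun j => ψ (ψ₂ j) := hψ.comp hψ₂
    have hρb : ∀ y, Tendsto (fun j => extPayoff (qn (φ (ψ (ψ₂ j)))) (sn (φ (ψ (ψ₂ j)))) y)
        atTop (𝓝 (b y)) := fun y => (hbt y).comp hmono2.tendsto_atTop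
    have hρs : Tendsto (fun j => sn (φ (ψ (ψ₂ j))) x) atTop (𝓝 (sStar x)) := by
      rw [hsStar]
      exact hψt.comp hψ₂.tendsto_atTop
    have hρq : Tendsto (fun j => qn (φ (ψ (ψ₂ j))) x) atTop (𝓝 g) := hgt
    have hdq := S8.tendsto_dotp hρq x
    have h1 : Tendsto (fun j => extPayoff (qn (φ (ψ (ψ₂ j)))) (sn (φ (ψ (ψ₂ j)))) x)
        atTop (𝓝 (dotp g x - sStar x)) := by
      have heq : (fun j => extPayoff (qn (φ (ψ (ψ₂ j)))) (sn (φ (ψ (ψ₂ j)))) x)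
          = fun j => dotp (qn (φ (ψ (ψ₂ j))) x) x - sn (φ (ψ (ψ₂ j))) x :=
        funext fun j => hb_truth _ x hx
      rw [heq]
      exact hdq.sub hρs
    have hbx : b x = dotp g x - sStar x := tendsto_nhds_unique (hρb x) h1
    refine ⟨g, hgΓ, by linarith, fun y => ?_⟩
    refine le_of_tendsto_of_tendsto' ((S8.tendsto_dotp hρq (y - x)).add (hρb x)) (hρb y) ?_
    intro j
    exact hb_sub _ x hx y
  choose gfn hg1 hg2 hg3 using key
  set qStar : E k → E k := fun x => if hx : x ∈ orthant k then gfn x hx else γ0 with hqStar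
  have hqs : ∀ x (hx : x ∈ orthant k), qStar x = gfn x hx := by
    intro x hx
    rw [hqStar]
    simp [dif_pos hx]
  have hAlloc : IsAlloc Γ qStar := by
    intro x hx
    rw [hqs x hx]
    exact hg1 x hx
  have hICs : IsIC qStar sStar := by
    intro x hx y hy
    rw [hqs x hx, hqs y hy]
    have h2 := hg2 x hx
    have h2' := hg2 y hy
    have h3 := hg3 y hy x
    rw [S8.dotp_sub] at h3
    show dotp (gfn x hx) x - sStar x ≥ dotp (gfn y hy) x - sStar y
    linarith
  have hIRs : IsIR qStar sStar := by
    intro x hx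
    rw [hqs x hx]
    have h2 := hg2 x hx
    have := hb0 x hx
    show 0 ≤ dotp (gfn x hx) x - sStar x
    linarith
  have hMs : MonotonicPay sStar := by
    intro x hx y hy hxy
    rw [hsStar]
    have hbd : IsBoundedUnder (· ≥ ·) atTop (fun j => sn (φ j) x) :=
      isBoundedUnder_of ⟨0, fun j => hNPT (φ j) x hx⟩
    exact limsup_le_limsup (Eventually.of_forall fun j => hMn (φ j) x hx y hy hxy)
      hbd.isCoboundedUnder_le
      (isBoundedUnder_of ⟨C * ‖y‖, fun j => hsle (φ j) y hy⟩)
  -- measurable modifications of the payment sequence composed with X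
  have hTm : ∀ j : ℕ, AEMeasurable (fun ω => sn (φ j) (X ω)) P :=
    fun j => (hintn (φ j)).aemeasurable
  have hHex : ∀ j : ℕ, ∃ h : Ω → ℝ, Measurable h ∧ (fun ω => sn (φ j) (X ω)) =ᵐ[P] h :=
    fun j => ⟨(hTm j).mk _, (hTm j).measurable_mk, (hTm j).ae_eq_mk⟩
  choose H hHm hHeq using hHex
  have hHae : ∀ᵐ ω ∂P, ∀ j : ℕ, sn (φ j) (X ω) = H j ω := ae_all_iff.mpr fun j => hHeq j
  have hWm : Measurable fun ω => limsup (fun j => H j ω) atTop := Measurable.limsup hHm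
  have hWeq : ∀ᵐ ω ∂P, sStar (X ω) = limsup (fun j => H j ω) atTop := by
    filter_upwards [hHae] with ω hω
    rw [hsStar]
    dsimp only
    congr 1
    exact funext hω
  have hsm : AEStronglyMeasurable (fun ω => sStar (X ω)) P :=
    hWm.aestronglyMeasurable.congr (hWeq.mono fun ω h => h.symm)
  have hg0fin : ∫⁻ ω, ENNReal.ofReal (C * ‖X ω‖) ∂P ≠ ⊤ := by
    rw [← ofReal_integral_eq_lintegral_ofReal hXint'
      (Eventually.of_forall fun ω => mul_nonneg hCnn (norm_nonneg _))]
    exact ENNReal.ofReal_ne_top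
  have hbound : ∀ j : ℕ, (fun ω => ENNReal.ofReal (H j ω)) ≤ᵐ[P]
      fun ω => ENNReal.ofReal (C * ‖X ω‖) := by
    intro j
    filter_upwards [hHeq j] with ω h
    rw [← h]
    exact ENNReal.ofReal_le_ofReal (hsle (φ j) _ (hXpos ω))
  have hfatou := limsup_lintegral_le (μ := P) (f := fun j ω => ENNReal.ofReal (H j ω))
      (fun ω => ENNReal.ofReal (C * ‖X ω‖))
      (fun j => ENNReal.measurable_ofReal.comp (hHm j)) hbound hg0fin
  have hterm : ∀ j : ℕ, ∫⁻ ω, ENNReal.ofReal (H j ω) ∂P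
      = ENNReal.ofReal (∫ ω, sn (φ j) (X ω) ∂P) := by
    intro j
    have he : (fun ω => ENNReal.ofReal (sn (φ j) (X ω))) =ᵐ[P]
        fun ω => ENNReal.ofReal (H j ω) := (hHeq j).mono fun ω h => congrArg ENNReal.ofReal h
    rw [← lintegral_congr_ae he, ← ofReal_integral_eq_lintegral_ofReal (hintn (φ j))
      (Eventually.of_forall fun ω => hNPT (φ j) _ (hXpos ω))]
  have hL1 : limsup (fun j => ∫⁻ ω, ENNReal.ofReal (H j ω) ∂P) atTop = ENNReal.ofReal R := by
    have ht : Tendsto (fun j => ENNReal.ofReal (∫ ω, sn (φ j) (X ω) ∂P)) atTop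
        (𝓝 (ENNReal.ofReal R)) := ENNReal.tendsto_ofReal (hrtend.comp hφ.tendsto_atTop)
    have heq2 : (fun j => ∫⁻ ω, ENNReal.ofReal (H j ω) ∂P)
        = fun j => ENNReal.ofReal (∫ ω, sn (φ j) (X ω) ∂P) := funext hterm
    rw [heq2]
    exact ht.limsup_eq
  have hRHS : ∫⁻ ω, limsup (fun j => ENNReal.ofReal (H j ω)) atTop ∂P
      = ∫⁻ ω, ENNReal.ofReal (sStar (X ω)) ∂P := by
    apply lintegral_congr_ae
    filter_upwards [hHae] with ω hω
    have h1 : (fun j => ENNReal.ofReal (H j ω)) = fun j => ENNReal.ofReal (sn (φ j) (X ω)) := by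
      funext j
      rw [hω j]
    rw [h1, S8.limsup_ofReal (fun j => hNPT (φ j) _ (hXpos ω))
      (fun j => hsle (φ j) _ (hXpos ω))]
  have hmain : ENNReal.ofReal R ≤ ∫⁻ ω, ENNReal.ofReal (sStar (X ω)) ∂P := by
    rw [← hL1, ← hRHS]
    exact hfatou
  have hfin2 : ∫⁻ ω, ENNReal.ofReal (sStar (X ω)) ∂P ≠ ⊤ := by
    refine ne_top_of_le_ne_top hg0fin (lintegral_mono fun ω => ?_)
    exact ENNReal.ofReal_le_ofReal (hsStar_ub _ (hXpos ω))
  have hint_eq : ∫ ω, sStar (X ω) ∂P = (∫⁻ ω, ENNReal.ofReal (sStar (X ω)) ∂P).toReal :=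
    integral_eq_lintegral_of_nonneg_ae (Eventually.of_forall fun ω => hsStar_lb _ (hXpos ω)) hsm
  have hge : R ≤ ∫ ω, sStar (X ω) ∂P := by
    rw [hint_eq]
    calc R = (ENNReal.ofReal R).toReal := (ENNReal.toReal_ofReal hR0).symm
      _ ≤ _ := ENNReal.toReal_mono hfin2 hmain
  have hmem : (∫ ω, sStar (X ω) ∂P) ∈ S := ⟨qStar, sStar, hAlloc, hICs, hIRs, hMs, rfl⟩
  exact ⟨qStar, sStar, hAlloc, hICs, hIRs, hMs, le_antisymm (le_csSup hSbdd hmem) hge⟩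
end
end
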